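/- MS4.t has the finite model property: for every formula φ of the language L_T∀, if MS4.t ⊬ φ, then there exist a finite MS4.t-algebra (B,□_F,□_P,∀) and an assignment of elements of B to the propositional letters under which the induced value of φ in B is different from the top element 1. -/

import Mathlib

/-- Formulas of the language `L_T∀` with modalities `□_F`, `□_P`, `∀`. -/
inductive AForm : Type
  | var : Nat → AForm
  | bot : AForm
  | and : AForm → AForm → AForm
  | or  : AForm → AForm → AForm
  | imp : AForm → AForm → AForm
  | boxF : AForm → AForm
  | boxP : AForm → AForm
  | fa   : AForm → AForm

def AForm.neg (φ : AForm) : AForm := φ.imp AForm.bot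
def AForm.iff (φ ψ : AForm) : AForm := (φ.imp ψ).and (ψ.imp φ)
/-- `◇_F φ := ¬□_F¬φ`. -/
def AForm.diaF (φ : AForm) : AForm := ((φ.neg).boxF).neg
/-- `◇_P φ := ¬□_P¬φ`. -/
def AForm.diaP (φ : AForm) : AForm := ((φ.neg).boxP).neg
/-- `∃φ := ¬∀¬φ`. -/
def AForm.exq (φ : AForm) : AForm := ((φ.neg).fa).neg

/-- The tense `MS4` logic `MS4.t`: classical logic with S4-axioms for `□_F` and
`□_P`, the tense axioms `p → □_P◇_F p` and `p → □_F◇_P p`, the S5-axioms for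
`∀`, and the left commutativity axiom `□_F∀p → ∀□_F p`, closed under modus
ponens and the three necessitation rules (axioms are given as schemes, hence
closure under uniform substitution is automatic). -/
inductive MS4t : AForm → Prop
  -- classical propositional axioms
  | a1 (φ ψ : AForm) : MS4t (φ.imp (ψ.imp φ))
  | a2 (φ ψ χ : AForm) : MS4t ((φ.imp (ψ.imp χ)).imp ((φ.imp ψ).imp (φ.imp χ)))
  | a3 (φ ψ : AForm) : MS4t ((φ.and ψ).imp φ)
  | a4 (φ ψ : AForm) : MS4t ((φ.and ψ).imp ψ)
  | a5 (φ ψ : AForm) : MS4t (φ.imp (ψ.imp (φ.and ψ)))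
  | a6 (φ ψ : AForm) : MS4t (φ.imp (φ.or ψ))
  | a7 (φ ψ : AForm) : MS4t (ψ.imp (φ.or ψ))
  | a8 (φ ψ χ : AForm) : MS4t ((φ.imp χ).imp ((ψ.imp χ).imp ((φ.or ψ).imp χ)))
  | a9 (φ : AForm) : MS4t (AForm.bot.imp φ)
  | dne (φ : AForm) : MS4t ((φ.neg.neg).imp φ)
  -- S4-axioms for □_F
  | bFK (φ ψ : AForm) : MS4t (((φ.imp ψ).boxF).imp ((φ.boxF).imp ψ.boxF))
  | bFT (φ : AForm) : MS4t ((φ.boxF).imp φ)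
  | bF4 (φ : AForm) : MS4t ((φ.boxF).imp φ.boxF.boxF)
  -- S4-axioms for □_P
  | bPK (φ ψ : AForm) : MS4t (((φ.imp ψ).boxP).imp ((φ.boxP).imp ψ.boxP))
  | bPT (φ : AForm) : MS4t ((φ.boxP).imp φ)
  | bP4 (φ : AForm) : MS4t ((φ.boxP).imp φ.boxP.boxP)
  -- tense axioms
  | tense1 (φ : AForm) : MS4t (φ.imp ((φ.diaF).boxP))
  | tense2 (φ : AForm) : MS4t (φ.imp ((φ.diaP).boxF))
  -- S5-axioms for ∀
  | faK (φ ψ : AForm) : MS4t (((φ.imp ψ).fa).imp ((φ.fa).imp ψ.fa))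
  | faT (φ : AForm) : MS4t ((φ.fa).imp φ)
  | fa4 (φ : AForm) : MS4t ((φ.fa).imp φ.fa.fa)
  | faB (φ : AForm) : MS4t (φ.imp (φ.exq.fa))
  -- left commutativity axiom
  | comm (φ : AForm) : MS4t ((φ.fa.boxF).imp (φ.boxF.fa))
  -- rules
  | mp (φ ψ : AForm) : MS4t (φ.imp ψ) → MS4t φ → MS4t ψ
  | necF (φ : AForm) : MS4t φ → MS4t φ.boxF
  | necP (φ : AForm) : MS4t φ → MS4t φ.boxP
  | necFa (φ : AForm) : MS4t φ → MS4t φ.fa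

/-- `(B,□)` is an S4-algebra (interior algebra). -/
structure IsS4 {B : Type} [BooleanAlgebra B] (box : B → B) : Prop where
  map_inf : ∀ a b : B, box (a ⊓ b) = box a ⊓ box b
  map_top : box ⊤ = ⊤
  le_self : ∀ a : B, box a ≤ a
  le_idem : ∀ a : B, box a ≤ box (box a)

/-- `(B,∀)` is an S5-algebra (monadic algebra): an S4-algebra satisfying
`a ≤ ∀∃a`, where `∃a = ¬∀¬a`. -/
structure IsS5 {B : Type} [BooleanAlgebra B] (fa : B → B) : Prop where
  s4 : IsS4 fa
  sym : ∀ a : B, a ≤ fa ((fa aᶜ)ᶜ)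

/-- `(B,■_F,■_P)` is an S4.t-algebra: two S4-operators linked by the tense
inequalities `a ≤ ■_P◆_F a` and `a ≤ ■_F◆_P a`. -/
structure IsS4t {B : Type} [BooleanAlgebra B] (bF bP : B → B) : Prop where
  s4F : IsS4 bF
  s4P : IsS4 bP
  pf : ∀ a : B, a ≤ bP ((bF aᶜ)ᶜ)
  fp : ∀ a : B, a ≤ bF ((bP aᶜ)ᶜ)

/-- `(B,□,∀)` is an MS4-algebra. -/
structure IsMS4 {B : Type} [BooleanAlgebra B] (box fa : B → B) : Prop where
  s4 : IsS4 box
  s5 : IsS5 fa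
  comm : ∀ a : B, box (fa a) ≤ fa (box a)

/-- `(B,□_F,□_P,∀)` is an MS4.t-algebra. -/
structure IsMS4t {B : Type} [BooleanAlgebra B] (bF bP fa : B → B) : Prop where
  s4t : IsS4t bF bP
  ms4 : IsMS4 bF fa

/-- The value of an `L_T∀`-formula in an algebra `(B,□_F,□_P,∀)` under an
assignment `v` of elements of `B` to the propositional letters. -/
def aeval {B : Type} [BooleanAlgebra B] (bF bP fa : B → B) (v : Nat → B) :
    AForm → B
  | .var n => v n
  | .bot => ⊥
  | .and φ ψ => aeval bF bP fa v φ ⊓ aeval bF bP fa v ψ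
  | .or φ ψ => aeval bF bP fa v φ ⊔ aeval bF bP fa v ψ
  | .imp φ ψ => (aeval bF bP fa v φ)ᶜ ⊔ aeval bF bP fa v ψ
  | .boxF φ => bF (aeval bF bP fa v φ)
  | .boxP φ => bP (aeval bF bP fa v φ)
  | .fa φ => fa (aeval bF bP fa v φ)

namespace FMP

open AForm

/-- Derivability from a list of hypotheses. -/
inductive Der : List AForm → AForm → Prop
  | ax {Γ : List AForm} {φ : AForm} : MS4t φ → Der Γ φ
  | hyp {Γ : List AForm} {φ : AForm} : φ ∈ Γ → Der Γ φ
  | mp {Γ : List AForm} {φ ψ : AForm} : Der Γ (φ.imp ψ) → Der Γ φ → Der Γ ψ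

namespace Der

theorem weaken {Γ Γ' φ} (h : Der Γ φ) (hs : Γ ⊆ Γ') : Der Γ' φ := by
  induction h with
  | ax h => exact ax h
  | hyp h => exact hyp (hs h)
  | mp _ _ ih1 ih2 => exact mp ih1 ih2

theorem toMS4t' {Δ φ} (h : Der Δ φ) : Δ = [] → MS4t φ := by
  induction h with
  | @ax _ h => intro _; exact h
  | @hyp _ h => intro hΔ; subst hΔ; simp at h
  | @mp _ _ _ _ ih1 ih2 => intro hΔ; exact MS4t.mp _ _ (ih1 hΔ) (ih2 hΔ)

theorem toMS4t {φ} (h : Der [] φ) : MS4t φ := toMS4t' h rfl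

theorem imp_id (Γ) (φ : AForm) : Der Γ (φ.imp φ) :=
  mp (mp (ax (MS4t.a2 φ (φ.imp φ) φ)) (ax (MS4t.a1 φ (φ.imp φ)))) (ax (MS4t.a1 φ φ))

theorem ded' {Δ ψ} (h : Der Δ ψ) : ∀ {Γ : List AForm} {φ : AForm}, Δ = φ :: Γ → Der Γ (φ.imp ψ) := by
  induction h with
  | @ax χ h => intro Γ φ _; exact mp (ax (MS4t.a1 χ φ)) (ax h)
  | @hyp χ h =>
    intro Γ φ hΔ
    subst hΔ
    rcases List.mem_cons.1 h with h | h
    · subst h; exact imp_id _ _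
    · exact mp (ax (MS4t.a1 χ φ)) (hyp h)
  | @mp α β _ _ ih1 ih2 =>
    intro Γ φ hΔ
    exact mp (mp (ax (MS4t.a2 φ α β)) (ih1 hΔ)) (ih2 hΔ)

theorem ded {Γ : List AForm} {φ ψ : AForm} (h : Der (φ :: Γ) ψ) : Der Γ (φ.imp ψ) := ded' h rfl

theorem andE1 {Γ : List AForm} {φ ψ : AForm} (h : Der Γ (φ.and ψ)) : Der Γ φ := mp (ax (MS4t.a3 φ ψ)) h
theorem andE2 {Γ : List AForm} {φ ψ : AForm} (h : Der Γ (φ.and ψ)) : Der Γ ψ := mp (ax (MS4t.a4 φ ψ)) h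
theorem andI {Γ : List AForm} {φ ψ : AForm} (h1 : Der Γ φ) (h2 : Der Γ ψ) : Der Γ (φ.and ψ) :=
  mp (mp (ax (MS4t.a5 φ ψ)) h1) h2
theorem orI1 {Γ : List AForm} {φ : AForm} (ψ : AForm) (h : Der Γ φ) : Der Γ (φ.or ψ) := mp (ax (MS4t.a6 φ ψ)) h
theorem orI2 {Γ : List AForm} {ψ : AForm} (φ : AForm) (h : Der Γ ψ) : Der Γ (φ.or ψ) := mp (ax (MS4t.a7 φ ψ)) h
theorem orE {Γ : List AForm} {φ ψ χ : AForm} (h : Der Γ (φ.or ψ)) (h1 : Der (φ :: Γ) χ) (h2 : Der (ψ :: Γ) χ) :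
    Der Γ χ :=
  mp (mp (mp (ax (MS4t.a8 φ ψ χ)) (ded h1)) (ded h2)) h
theorem botE {Γ} (φ : AForm) (h : Der Γ AForm.bot) : Der Γ φ := mp (ax (MS4t.a9 φ)) h
theorem negE {Γ : List AForm} {φ : AForm} (χ : AForm) (h1 : Der Γ φ.neg) (h2 : Der Γ φ) : Der Γ χ := botE χ (mp h1 h2)

theorem hyp0 {Γ} (φ : AForm) : Der (φ :: Γ) φ := hyp List.mem_cons_self
theorem hyp1 {Γ} (φ ψ : AForm) : Der (ψ :: φ :: Γ) φ := hyp (by simp)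
theorem hyp2 {Γ} (φ ψ χ : AForm) : Der (χ :: ψ :: φ :: Γ) φ := hyp (by simp)

theorem lem (Γ) (φ : AForm) : Der Γ (φ.or φ.neg) := by
  have h1 : Der Γ ((φ.or φ.neg).neg.neg) := by
    apply ded
    exact mp (hyp0 _) (orI2 _ (ded (mp (hyp1 _ _) (orI1 _ (hyp0 _)))))
  exact mp (ax (MS4t.dne _)) h1

end Der

/-- Provable implication: the Lindenbaum preorder. -/
def ple (φ ψ : AForm) : Prop := MS4t (φ.imp ψ)

theorem ple_refl (φ : AForm) : ple φ φ := Der.toMS4t (Der.imp_id [] φ)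

theorem ple_trans {φ ψ χ} (h1 : ple φ ψ) (h2 : ple ψ χ) : ple φ χ := by
  refine Der.toMS4t (Der.ded ?_)
  exact Der.mp (Der.ax h2) (Der.mp (Der.ax h1) (Der.hyp0 _))

def peq (φ ψ : AForm) : Prop := ple φ ψ ∧ ple ψ φ

theorem peq_refl (φ : AForm) : peq φ φ := ⟨ple_refl φ, ple_refl φ⟩
theorem peq_symm {φ ψ} (h : peq φ ψ) : peq ψ φ := ⟨h.2, h.1⟩
theorem peq_trans {φ ψ χ} (h1 : peq φ ψ) (h2 : peq ψ χ) : peq φ χ :=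
  ⟨ple_trans h1.1 h2.1, ple_trans h2.2 h1.2⟩

instance pSetoid : Setoid AForm := ⟨peq, peq_refl, peq_symm, peq_trans⟩

end FMP
namespace FMP
open AForm

-- congruence lemmas
theorem ple_and {φ φ' ψ ψ' : AForm} (h1 : ple φ φ') (h2 : ple ψ ψ') :
    ple (φ.and ψ) (φ'.and ψ') := by
  refine Der.toMS4t (Der.ded ?_)
  exact Der.andI (Der.mp (.ax h1) (Der.andE1 (Der.hyp0 _)))
    (Der.mp (.ax h2) (Der.andE2 (Der.hyp0 _)))

theorem ple_or {φ φ' ψ ψ' : AForm} (h1 : ple φ φ') (h2 : ple ψ ψ') :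
    ple (φ.or ψ) (φ'.or ψ') := by
  refine Der.toMS4t (Der.ded ?_)
  exact Der.orE (Der.hyp0 _) (Der.orI1 _ (Der.mp (.ax h1) (Der.hyp0 _)))
    (Der.orI2 _ (Der.mp (.ax h2) (Der.hyp0 _)))

theorem ple_imp {φ φ' ψ ψ' : AForm} (h1 : ple φ' φ) (h2 : ple ψ ψ') :
    ple (φ.imp ψ) (φ'.imp ψ') := by
  refine Der.toMS4t (Der.ded (Der.ded ?_))
  exact Der.mp (.ax h2) (Der.mp (Der.hyp1 _ _) (Der.mp (.ax h1) (Der.hyp0 _)))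

theorem ple_neg {φ φ' : AForm} (h : ple φ' φ) : ple φ.neg φ'.neg :=
  ple_imp h (ple_refl _)

theorem mono_boxF {φ ψ : AForm} (h : ple φ ψ) : ple φ.boxF ψ.boxF :=
  MS4t.mp _ _ (MS4t.bFK φ ψ) (MS4t.necF _ h)
theorem mono_boxP {φ ψ : AForm} (h : ple φ ψ) : ple φ.boxP ψ.boxP :=
  MS4t.mp _ _ (MS4t.bPK φ ψ) (MS4t.necP _ h)
theorem mono_fa {φ ψ : AForm} (h : ple φ ψ) : ple φ.fa ψ.fa :=
  MS4t.mp _ _ (MS4t.faK φ ψ) (MS4t.necFa _ h)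

/-- The Lindenbaum–Tarski algebra of `MS4.t`. -/
def Lin : Type := Quotient pSetoid

namespace Lin

def mk (φ : AForm) : Lin := Quotient.mk pSetoid φ

def le : Lin → Lin → Prop :=
  Quotient.lift₂ ple (fun _ _ _ _ h1 h2 =>
    propext ⟨fun h => ple_trans (ple_trans h1.2 h) h2.1,
             fun h => ple_trans (ple_trans h1.1 h) h2.2⟩)

def and' : Lin → Lin → Lin :=
  Quotient.map₂ AForm.and (fun _ _ h1 _ _ h2 =>
    ⟨ple_and h1.1 h2.1, ple_and h1.2 h2.2⟩)
def or' : Lin → Lin → Lin :=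
  Quotient.map₂ AForm.or (fun _ _ h1 _ _ h2 =>
    ⟨ple_or h1.1 h2.1, ple_or h1.2 h2.2⟩)
def neg' : Lin → Lin :=
  Quotient.map AForm.neg (fun _ _ h => ⟨ple_neg h.2, ple_neg h.1⟩)
def boxF' : Lin → Lin :=
  Quotient.map AForm.boxF (fun _ _ h => ⟨mono_boxF h.1, mono_boxF h.2⟩)
def boxP' : Lin → Lin :=
  Quotient.map AForm.boxP (fun _ _ h => ⟨mono_boxP h.1, mono_boxP h.2⟩)
def fa' : Lin → Lin :=
  Quotient.map AForm.fa (fun _ _ h => ⟨mono_fa h.1, mono_fa h.2⟩)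

theorem le_mk {φ ψ : AForm} : le (mk φ) (mk ψ) ↔ ple φ ψ := Iff.rfl

theorem ind {p : Lin → Prop} (h : ∀ φ, p (mk φ)) : ∀ a, p a := Quotient.ind h
theorem ind₂ {p : Lin → Lin → Prop} (h : ∀ φ ψ, p (mk φ) (mk ψ)) : ∀ a b, p a b :=
  Quotient.ind₂ h
theorem ind₃ {p : Lin → Lin → Lin → Prop} (h : ∀ φ ψ χ, p (mk φ) (mk ψ) (mk χ)) :
    ∀ a b c, p a b c := by
  intro a b c
  induction a using Quotient.ind
  induction b using Quotient.ind
  induction c using Quotient.ind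
  exact h _ _ _

theorem mk_eq {φ ψ : AForm} (h : peq φ ψ) : mk φ = mk ψ := Quotient.sound h

-- helper: derivation-based proof of `ple`
theorem ple_of_der {φ ψ : AForm} (h : Der [φ] ψ) : ple φ ψ := Der.toMS4t (Der.ded h)

instance : BooleanAlgebra Lin where
  le := le
  le_refl := ind fun φ => ple_refl φ
  le_trans := ind₃ fun _ _ _ h1 h2 => ple_trans h1 h2
  le_antisymm := ind₂ fun _ _ h1 h2 => mk_eq ⟨h1, h2⟩
  sup := or'
  inf := and'
  le_sup_left := ind₂ fun φ ψ => show ple _ _ from MS4t.a6 φ ψ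
  le_sup_right := ind₂ fun φ ψ => show ple _ _ from MS4t.a7 φ ψ
  sup_le := ind₃ fun _ _ _ h1 h2 => MS4t.mp _ _ (MS4t.mp _ _ (MS4t.a8 _ _ _) h1) h2
  inf_le_left := ind₂ fun φ ψ => show ple _ _ from MS4t.a3 φ ψ
  inf_le_right := ind₂ fun φ ψ => show ple _ _ from MS4t.a4 φ ψ
  le_inf := ind₃ fun _ _ _ h1 h2 => ple_of_der
    (Der.andI (Der.mp (.ax h1) (Der.hyp0 _)) (Der.mp (.ax h2) (Der.hyp0 _)))
  le_sup_inf := ind₃ fun a b c => ple_of_der <| by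
    refine Der.orE (Der.andE1 (Der.hyp0 _)) (Der.orI1 _ (Der.hyp0 _)) ?_
    refine Der.orE (Der.andE2 (Der.hyp1 _ _)) (Der.orI1 _ (Der.hyp0 _)) ?_
    exact Der.orI2 _ (Der.andI (Der.hyp1 _ _) (Der.hyp0 _))
  compl := neg'
  top := mk AForm.bot.neg
  bot := mk AForm.bot
  inf_compl_le_bot := ind fun φ => ple_of_der
    (Der.mp (Der.andE2 (Der.hyp0 _)) (Der.andE1 (Der.hyp0 _)))
  top_le_sup_compl := ind fun φ => ple_of_der (Der.lem _ φ)
  le_top := ind fun φ => ple_of_der (Der.ded (Der.hyp0 _))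
  bot_le := ind fun φ => show ple _ _ from MS4t.a9 φ

theorem mk_le_mk {φ ψ : AForm} : mk φ ≤ mk ψ ↔ ple φ ψ := Iff.rfl
theorem mk_inf (φ ψ : AForm) : mk φ ⊓ mk ψ = mk (φ.and ψ) := rfl
theorem mk_sup (φ ψ : AForm) : mk φ ⊔ mk ψ = mk (φ.or ψ) := rfl
theorem mk_compl (φ : AForm) : (mk φ)ᶜ = mk φ.neg := rfl
theorem bot_def : (⊥ : Lin) = mk AForm.bot := rfl
theorem top_def : (⊤ : Lin) = mk AForm.bot.neg := rfl

end Lin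
end FMP
namespace FMP
open AForm
namespace Lin

theorem ple_of_thm {φ ψ : AForm} (h : MS4t ψ) : ple φ ψ :=
  MS4t.mp _ _ (MS4t.a1 ψ φ) h

theorem boxF_inf (φ ψ : AForm) :
    peq ((φ.and ψ).boxF) (φ.boxF.and ψ.boxF) := by
  constructor
  · exact ple_of_der (Der.andI
      (Der.mp (.ax (mono_boxF (MS4t.a3 φ ψ))) (Der.hyp0 _))
      (Der.mp (.ax (mono_boxF (MS4t.a4 φ ψ))) (Der.hyp0 _)))
  · refine ple_of_der ?_
    have s1 : MS4t (φ.boxF.imp ((ψ.imp (φ.and ψ)).boxF)) := mono_boxF (MS4t.a5 φ ψ)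
    have s2 := MS4t.bFK ψ (φ.and ψ)
    exact Der.mp (Der.mp (.ax s2) (Der.mp (.ax s1) (Der.andE1 (Der.hyp0 _))))
      (Der.andE2 (Der.hyp0 _))

theorem boxP_inf (φ ψ : AForm) :
    peq ((φ.and ψ).boxP) (φ.boxP.and ψ.boxP) := by
  constructor
  · exact ple_of_der (Der.andI
      (Der.mp (.ax (mono_boxP (MS4t.a3 φ ψ))) (Der.hyp0 _))
      (Der.mp (.ax (mono_boxP (MS4t.a4 φ ψ))) (Der.hyp0 _)))
  · refine ple_of_der ?_
    have s1 : MS4t (φ.boxP.imp ((ψ.imp (φ.and ψ)).boxP)) := mono_boxP (MS4t.a5 φ ψ)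
    have s2 := MS4t.bPK ψ (φ.and ψ)
    exact Der.mp (Der.mp (.ax s2) (Der.mp (.ax s1) (Der.andE1 (Der.hyp0 _))))
      (Der.andE2 (Der.hyp0 _))

theorem fa_inf (φ ψ : AForm) :
    peq ((φ.and ψ).fa) (φ.fa.and ψ.fa) := by
  constructor
  · exact ple_of_der (Der.andI
      (Der.mp (.ax (mono_fa (MS4t.a3 φ ψ))) (Der.hyp0 _))
      (Der.mp (.ax (mono_fa (MS4t.a4 φ ψ))) (Der.hyp0 _)))
  · refine ple_of_der ?_
    have s1 : MS4t (φ.fa.imp ((ψ.imp (φ.and ψ)).fa)) := mono_fa (MS4t.a5 φ ψ)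
    have s2 := MS4t.faK ψ (φ.and ψ)
    exact Der.mp (Der.mp (.ax s2) (Der.mp (.ax s1) (Der.andE1 (Der.hyp0 _))))
      (Der.andE2 (Der.hyp0 _))

theorem thm_top : MS4t (AForm.bot.neg) := Der.toMS4t (Der.imp_id [] AForm.bot)

theorem isS4_boxF : IsS4 (boxF' : Lin → Lin) where
  map_inf := ind₂ fun φ ψ => mk_eq (boxF_inf φ ψ)
  map_top := le_antisymm le_top (show ple _ _ from ple_of_thm (MS4t.necF _ thm_top))
  le_self := ind fun φ => show ple _ _ from MS4t.bFT φ
  le_idem := ind fun φ => show ple _ _ from MS4t.bF4 φ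

theorem isS4_boxP : IsS4 (boxP' : Lin → Lin) where
  map_inf := ind₂ fun φ ψ => mk_eq (boxP_inf φ ψ)
  map_top := le_antisymm le_top (show ple _ _ from ple_of_thm (MS4t.necP _ thm_top))
  le_self := ind fun φ => show ple _ _ from MS4t.bPT φ
  le_idem := ind fun φ => show ple _ _ from MS4t.bP4 φ

theorem isS5_fa : IsS5 (fa' : Lin → Lin) where
  s4 :=
  { map_inf := ind₂ fun φ ψ => mk_eq (fa_inf φ ψ)
    map_top := le_antisymm le_top (show ple _ _ from ple_of_thm (MS4t.necFa _ thm_top))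
    le_self := ind fun φ => show ple _ _ from MS4t.faT φ
    le_idem := ind fun φ => show ple _ _ from MS4t.fa4 φ }
  sym := ind fun φ => show ple _ _ from MS4t.faB φ

theorem isMS4t_Lin : IsMS4t (boxF' : Lin → Lin) boxP' fa' where
  s4t :=
  { s4F := isS4_boxF
    s4P := isS4_boxP
    pf := ind fun φ => show ple _ _ from MS4t.tense1 φ
    fp := ind fun φ => show ple _ _ from MS4t.tense2 φ }
  ms4 :=
  { s4 := isS4_boxF
    s5 := isS5_fa
    comm := ind fun φ => show ple _ _ from MS4t.comm φ }

theorem imp_peq (φ ψ : AForm) : peq (φ.neg.or ψ) (φ.imp ψ) := by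
  constructor
  · refine ple_of_der (Der.ded ?_)
    exact Der.orE (Der.hyp1 _ _) (Der.negE ψ (Der.hyp0 _) (Der.hyp1 _ _)) (Der.hyp0 _)
  · refine ple_of_der ?_
    exact Der.orE (Der.lem _ φ) (Der.orI2 _ (Der.mp (Der.hyp1 _ _) (Der.hyp0 _)))
      (Der.orI1 _ (Der.hyp0 _))

theorem aeval_mk (ψ : AForm) :
    aeval boxF' boxP' fa' (fun n => mk (AForm.var n)) ψ = mk ψ := by
  induction ψ with
  | var n => rfl
  | bot => rfl
  | and φ ψ ih1 ih2 => show _ ⊓ _ = _; rw [ih1, ih2]; rfl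
  | or φ ψ ih1 ih2 => show _ ⊔ _ = _; rw [ih1, ih2]; rfl
  | imp φ ψ ih1 ih2 =>
    show _ᶜ ⊔ _ = _
    rw [ih1, ih2, mk_compl, mk_sup]
    exact mk_eq (imp_peq φ ψ)
  | boxF φ ih => show boxF' _ = _; rw [ih]; rfl
  | boxP φ ih => show boxP' _ = _; rw [ih]; rfl
  | fa φ ih => show fa' _ = _; rw [ih]; rfl

theorem mk_ne_top {φ : AForm} (h : ¬ MS4t φ) : mk φ ≠ ⊤ := by
  intro heq
  apply h
  have h2 : mk AForm.bot.neg = mk φ := by rw [← top_def, heq]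
  have : peq AForm.bot.neg φ := Quotient.exact h2
  exact MS4t.mp _ _ this.1 thm_top

end Lin
end FMP
section Alg

variable {B : Type} [BooleanAlgebra B]

/-- `◇` of an operator. -/
def dia (box : B → B) (a : B) : B := (box aᶜ)ᶜ

theorem IsS4.mono {box : B → B} (h : IsS4 box) {a b : B} (hab : a ≤ b) :
    box a ≤ box b := by
  have hh : a ⊓ b = a := inf_eq_left.2 hab
  calc box a = box (a ⊓ b) := by rw [hh]
  _ = box a ⊓ box b := h.map_inf a b
  _ ≤ box b := inf_le_right

theorem IsS4.dia_mono {box : B → B} (h : IsS4 box) {a b : B} (hab : a ≤ b) :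
    dia box a ≤ dia box b :=
  compl_le_compl (h.mono (compl_le_compl hab))

theorem IsS4.dia_bot {box : B → B} (h : IsS4 box) : dia box (⊥ : B) = ⊥ := by
  simp [dia, h.map_top]

theorem IsS4.le_dia {box : B → B} (h : IsS4 box) (a : B) : a ≤ dia box a := by
  have h1 : box aᶜ ≤ aᶜ := h.le_self aᶜ
  calc a = aᶜᶜ := (compl_compl a).symm
  _ ≤ (box aᶜ)ᶜ := compl_le_compl h1

theorem IsS4.dia_sup {box : B → B} (h : IsS4 box) (a b : B) :
    dia box (a ⊔ b) = dia box a ⊔ dia box b := by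
  simp only [dia, compl_sup, h.map_inf, compl_inf]

/-- The key normal-modal law `□a ⊓ ◇b ≤ ◇(a ⊓ b)`. -/
theorem IsS4.box_inf_dia {box : B → B} (h : IsS4 box) (a b : B) :
    box a ⊓ dia box b ≤ dia box (a ⊓ b) := by
  rw [← sdiff_eq_bot_iff, sdiff_eq]
  simp only [dia, compl_compl]
  have h2 : a ⊓ (a ⊓ b)ᶜ ≤ bᶜ := by
    rw [compl_inf, inf_sup_left]
    simp
  have h3 : box a ⊓ box (a ⊓ b)ᶜ ≤ box bᶜ := ((h.map_inf _ _).symm.le).trans (h.mono h2)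
  refine le_bot_iff.1 ?_
  calc box a ⊓ (box bᶜ)ᶜ ⊓ box (a ⊓ b)ᶜ
      = box a ⊓ box (a ⊓ b)ᶜ ⊓ (box bᶜ)ᶜ := by ac_rfl
    _ ≤ box bᶜ ⊓ (box bᶜ)ᶜ := inf_le_inf h3 le_rfl
    _ = ⊥ := by simp

theorem IsS4.dia_dia {box : B → B} (h : IsS4 box) (a : B) :
    dia box (dia box a) ≤ dia box a := by
  simp only [dia, compl_compl]
  exact compl_le_compl (h.le_idem aᶜ)

theorem IsS5.ex_fa_le {fa : B → B} (h : IsS5 fa) (a : B) : dia fa (fa a) ≤ a := by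
  have h1 := compl_le_compl (h.sym aᶜ)
  simp only [dia, compl_compl] at h1 ⊢
  exact h1

theorem IsS5.fa_idem {fa : B → B} (h : IsS5 fa) (a : B) : fa (fa a) = fa a :=
  le_antisymm (h.s4.le_self _) (h.s4.le_idem _)

theorem IsS5.ex_fa {fa : B → B} (h : IsS5 fa) (a : B) : dia fa (fa a) = fa a :=
  le_antisymm (by
    have := h.ex_fa_le (fa a)
    rwa [h.fa_idem a] at this) (h.s4.le_dia _)

theorem IsS5.ex_ex {fa : B → B} (h : IsS5 fa) (a : B) :
    dia fa (dia fa a) = dia fa a := by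
  simp only [dia, compl_compl]
  rw [h.fa_idem]

theorem IsS5.fixed_compl {fa : B → B} (h : IsS5 fa) {c : B} (hc : dia fa c = c) :
    dia fa cᶜ = cᶜ := by
  have h1 : cᶜ = fa cᶜ := by
    conv_lhs => rw [← hc]
    simp [dia]
  rw [h1]
  exact h.ex_fa _

theorem IsS5.fixed_inf {fa : B → B} (h : IsS5 fa) {c d : B} (hc : dia fa c = c)
    (hd : dia fa d = d) : dia fa (c ⊓ d) = c ⊓ d := by
  refine le_antisymm ?_ (h.s4.le_dia _)
  calc dia fa (c ⊓ d) ≤ dia fa c ⊓ dia fa d :=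
        le_inf (h.s4.dia_mono inf_le_left) (h.s4.dia_mono inf_le_right)
    _ = c ⊓ d := by rw [hc, hd]

/-- `∃(a ⊓ c) = ∃a ⊓ c` for fixed `c`. -/
theorem IsS5.ex_inf_fixed {fa : B → B} (h : IsS5 fa) {c : B} (hc : dia fa c = c) (a : B) :
    dia fa (a ⊓ c) = dia fa a ⊓ c := by
  refine le_antisymm (le_inf (h.s4.dia_mono inf_le_left)
    ((h.s4.dia_mono inf_le_right).trans_eq hc)) ?_
  have hdec : a = (a ⊓ c) ⊔ (a ⊓ cᶜ) := by
    rw [← inf_sup_left]; simp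
  have h1 : dia fa a = dia fa (a ⊓ c) ⊔ dia fa (a ⊓ cᶜ) := by
    conv_lhs => rw [hdec]
    exact h.s4.dia_sup _ _
  have h2 : dia fa (a ⊓ cᶜ) ≤ cᶜ := (h.s4.dia_mono inf_le_right).trans_eq (h.fixed_compl hc)
  calc dia fa a ⊓ c = (dia fa (a ⊓ c) ⊔ dia fa (a ⊓ cᶜ)) ⊓ c := by rw [← h1]
    _ ≤ (dia fa (a ⊓ c) ⊔ cᶜ) ⊓ c := inf_le_inf (sup_le_sup le_rfl h2) le_rfl
    _ = dia fa (a ⊓ c) ⊓ c := by rw [inf_sup_right]; simp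
    _ ≤ dia fa (a ⊓ c) := inf_le_left

/-- Conjugacy of the tense diamonds. -/
theorem IsS4t.conj {bF bP : B → B} (h : IsS4t bF bP) {x y : B}
    (hxy : y ⊓ dia bP x = ⊥) : x ⊓ dia bF y = ⊥ := by
  have h1 : x ≤ bF (dia bP x) := h.fp x
  have h2 : x ⊓ dia bF y ≤ bF (dia bP x) ⊓ dia bF y := inf_le_inf h1 le_rfl
  have h3 : bF (dia bP x) ⊓ dia bF y ≤ dia bF (dia bP x ⊓ y) := h.s4F.box_inf_dia _ _
  have h4 : dia bP x ⊓ y = ⊥ := by rw [inf_comm]; exact hxy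
  rw [h4, h.s4F.dia_bot] at h3
  exact le_bot_iff.1 (h2.trans h3)

theorem IsS4t.conj' {bF bP : B → B} (h : IsS4t bF bP) {x y : B}
    (hxy : y ⊓ dia bF x = ⊥) : x ⊓ dia bP y = ⊥ := by
  have h1 : x ≤ bP (dia bF x) := h.pf x
  have h2 : x ⊓ dia bP y ≤ bP (dia bF x) ⊓ dia bP y := inf_le_inf h1 le_rfl
  have h3 : bP (dia bF x) ⊓ dia bP y ≤ dia bP (dia bF x ⊓ y) := h.s4P.box_inf_dia _ _
  have h4 : dia bF x ⊓ y = ⊥ := by rw [inf_comm]; exact hxy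
  rw [h4, h.s4P.dia_bot] at h3
  exact le_bot_iff.1 (h2.trans h3)

/-- Self-conjugacy of `∃` in an S5-algebra. -/
theorem IsS5.conj {fa : B → B} (h : IsS5 fa) {x y : B}
    (hxy : y ⊓ dia fa x = ⊥) : x ⊓ dia fa y = ⊥ := by
  have h1 : y ≤ (dia fa x)ᶜ := by
    rwa [← sdiff_eq_bot_iff, sdiff_eq, compl_compl]
  have h2 : (dia fa x)ᶜ = fa xᶜ := by rw [dia, compl_compl]
  have h3 : dia fa y ≤ dia fa (fa xᶜ) := h.s4.dia_mono (h1.trans_eq h2)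
  have h4 : dia fa y ≤ xᶜ := h3.trans (h.ex_fa_le xᶜ)
  refine le_bot_iff.1 ?_
  calc x ⊓ dia fa y ≤ x ⊓ xᶜ := inf_le_inf le_rfl h4
    _ = ⊥ := by simp

/-- The dual of the MS4 commutativity axiom: `∃◇_F a ≤ ◇_F ∃a`. -/
theorem IsMS4.ex_dia {bF fa : B → B} (h : IsMS4 bF fa) (a : B) :
    dia fa (dia bF a) ≤ dia bF (dia fa a) := by
  have h1 : bF (fa aᶜ) ≤ fa (bF aᶜ) := h.comm aᶜ
  calc dia fa (dia bF a) = (fa (bF aᶜ))ᶜ := by simp only [dia, compl_compl]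
    _ ≤ (bF (fa aᶜ))ᶜ := compl_le_compl h1
    _ = dia bF (dia fa a) := by simp only [dia, compl_compl]

end Alg
section Atoms

open scoped Classical

variable {B : Type} [BooleanAlgebra B]

/-- `x` is an atom of the finite subalgebra `D`. -/
def AtomOf (D : Finset B) (x : B) : Prop :=
  x ∈ D ∧ x ≠ ⊥ ∧ ∀ y ∈ D, y ≤ x → y = ⊥ ∨ y = x

variable {D : Finset B}

theorem hsupD (hinf : ∀ a ∈ D, ∀ b ∈ D, a ⊓ b ∈ D) (hcompl : ∀ a ∈ D, aᶜ ∈ D)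
    {a b : B} (ha : a ∈ D) (hb : b ∈ D) : a ⊔ b ∈ D := by
  have h := hcompl _ (hinf _ (hcompl _ ha) _ (hcompl _ hb))
  simpa using h

theorem exists_atom_le {d : B} (hd : d ∈ D) (hne : d ≠ ⊥) :
    ∃ x, AtomOf D x ∧ x ≤ d := by
  have hS : (D.filter fun y => y ≠ ⊥ ∧ y ≤ d).Nonempty :=
    ⟨d, Finset.mem_filter.2 ⟨hd, hne, le_rfl⟩⟩
  obtain ⟨m, hm, hmin⟩ : ∃ m ∈ (D.filter fun y => y ≠ ⊥ ∧ y ≤ d),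
      ∀ x ∈ (D.filter fun y => y ≠ ⊥ ∧ y ≤ d), ¬ x < m := by
    obtain ⟨m, hm⟩ := Finset.exists_minimal hS
    exact ⟨m, hm.1, fun x hx hlt => absurd (hm.2 hx hlt.le) (not_le_of_gt hlt)⟩
  rw [Finset.mem_filter] at hm
  refine ⟨m, ⟨hm.1, hm.2.1, ?_⟩, hm.2.2⟩
  intro y hy hym
  by_cases hyb : y = ⊥
  · exact Or.inl hyb
  · right
    have hyS : y ∈ D.filter fun y => y ≠ ⊥ ∧ y ≤ d :=
      Finset.mem_filter.2 ⟨hy, hyb, hym.trans hm.2.2⟩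
    have hnlt := hmin y hyS
    by_contra hne2
    exact hnlt (lt_of_le_of_ne hym hne2)

theorem atom_le_or_compl (hinf : ∀ a ∈ D, ∀ b ∈ D, a ⊓ b ∈ D) {x d : B} (hx : AtomOf D x) (hd : d ∈ D) :
    x ≤ d ∨ x ≤ dᶜ := by
  have hmem : x ⊓ d ∈ D := hinf _ hx.1 _ hd
  rcases hx.2.2 _ hmem inf_le_left with h | h
  · right
    have : Disjoint x d := disjoint_iff.2 h
    exact this.le_compl_right
  · left
    exact inf_eq_left.1 h

theorem atom_le_of_inf_ne (hinf : ∀ a ∈ D, ∀ b ∈ D, a ⊓ b ∈ D) {x d : B} (hx : AtomOf D x) (hd : d ∈ D)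
    (h : x ⊓ d ≠ ⊥) : x ≤ d := by
  rcases atom_le_or_compl hinf hx hd with h' | h'
  · exact h'
  · exact absurd (le_bot_iff.1 (by calc x ⊓ d ≤ dᶜ ⊓ d := inf_le_inf h' le_rfl
      _ = ⊥ := by simp)) h

theorem le_of_atoms (hinf : ∀ a ∈ D, ∀ b ∈ D, a ⊓ b ∈ D) (hcompl : ∀ a ∈ D, aᶜ ∈ D) {d e : B} (hd : d ∈ D) (he : e ∈ D)
    (h : ∀ x, AtomOf D x → x ≤ d → x ≤ e) : d ≤ e := by
  by_contra hne
  have hne' : d ⊓ eᶜ ≠ ⊥ := by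
    intro hb
    exact hne ((disjoint_iff.2 hb).le_compl_right.trans_eq (compl_compl e))
  obtain ⟨x, hx, hxle⟩ := exists_atom_le (hinf _ hd _ (hcompl _ he)) hne'
  have h1 : x ≤ e := h x hx (hxle.trans inf_le_left)
  have h2 : x ≤ eᶜ := hxle.trans inf_le_right
  exact hx.2.1 (le_bot_iff.1 (le_inf h1 h2 |>.trans (by simp)))

theorem sup_mem_D (hinf : ∀ a ∈ D, ∀ b ∈ D, a ⊓ b ∈ D) (hcompl : ∀ a ∈ D, aᶜ ∈ D) (hbot : (⊥ : B) ∈ D) (s : Finset B) (hs : ∀ a ∈ s, a ∈ D) : s.sup id ∈ D := by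
  induction s using Finset.cons_induction with
  | empty => simpa using hbot
  | cons a s ha ih =>
    rw [Finset.sup_cons]
    exact hsupD hinf hcompl (hs a (Finset.mem_cons_self a s))
      (ih fun b hb => hs b (Finset.mem_cons_of_mem hb))

/-- The atoms of `D` below `d`. -/
noncomputable def atomsBelow (D : Finset B) (d : B) : Finset B :=
  D.filter fun x => AtomOf D x ∧ x ≤ d

theorem atomsBelow_sup (hinf : ∀ a ∈ D, ∀ b ∈ D, a ⊓ b ∈ D) (hcompl : ∀ a ∈ D, aᶜ ∈ D) (hbot : (⊥ : B) ∈ D) {d : B} (hd : d ∈ D) : (atomsBelow D d).sup id = d := by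
  refine le_antisymm (Finset.sup_le fun x hx => ?_) ?_
  · exact (Finset.mem_filter.1 hx).2.2
  · refine le_of_atoms hinf hcompl hd ?_ ?_
    · exact sup_mem_D hinf hcompl hbot _ fun a ha => (Finset.mem_filter.1 ha).1
    · intro x hx hxd
      exact le_trans le_rfl (Finset.le_sup (f := id)
        (show x ∈ atomsBelow D d from Finset.mem_filter.2 ⟨hx.1, hx, hxd⟩))

theorem compl_finset_sup (s : Finset B) : (s.sup id)ᶜ = s.inf compl := by
  induction s using Finset.cons_induction with
  | empty => simp
  | cons a s ha ih => rw [Finset.sup_cons, Finset.inf_cons, compl_sup, ih]; rfl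

theorem box_finset_inf {box : B → B} (h : IsS4 box) (s : Finset B) (f : B → B) :
    box (s.inf f) = s.inf fun a => box (f a) := by
  induction s using Finset.cons_induction with
  | empty => simpa using h.map_top
  | cons a s ha ih => rw [Finset.inf_cons, Finset.inf_cons, h.map_inf, ih]

/-- Decomposition of a diamond over the atoms of `D`. -/
theorem dia_decompose (hinf : ∀ a ∈ D, ∀ b ∈ D, a ⊓ b ∈ D) (hcompl : ∀ a ∈ D, aᶜ ∈ D) (hbot : (⊥ : B) ∈ D) {box : B → B} (h : IsS4 box) {x d : B} (hd : d ∈ D)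
    (hnb : x ⊓ dia box d ≠ ⊥) :
    ∃ y, AtomOf D y ∧ y ≤ d ∧ x ⊓ dia box y ≠ ⊥ := by
  by_contra hcon
  push_neg at hcon
  have hxb : ∀ y ∈ atomsBelow D d, x ≤ box yᶜ := by
    intro y hy
    rw [atomsBelow, Finset.mem_filter] at hy
    have hb : x ⊓ dia box y = ⊥ := by
      by_contra hne
      exact hne (hcon y hy.2.1 hy.2.2)
    have : x ≤ (dia box ↑y)ᶜ := (disjoint_iff.2 hb).le_compl_right
    rwa [dia, compl_compl] at this
  have h1 : x ≤ (atomsBelow D d).inf fun y => box yᶜ := Finset.le_inf hxb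
  have h2 : ((atomsBelow D d).inf fun y => box yᶜ) = box dᶜ := by
    rw [← box_finset_inf h _ compl, ← compl_finset_sup,
      atomsBelow_sup hinf hcompl hbot hd]
  have h3 : x ≤ (dia box d)ᶜ := by
    rw [dia, compl_compl]
    exact h1.trans_eq h2
  exact hnb (le_bot_iff.1 (by
    calc x ⊓ dia box d ≤ (dia box d)ᶜ ⊓ dia box d := inf_le_inf h3 le_rfl
    _ = ⊥ := by simp))

end Atoms
section Filtration

open scoped Classical

variable {B : Type} [BooleanAlgebra B]

/-- A finite subalgebra suitable for filtration. -/
structure GoodD (bF bP fa : B → B) (D : Finset B) : Prop where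
  alg : IsMS4t bF bP fa
  inf : ∀ a ∈ D, ∀ b ∈ D, a ⊓ b ∈ D
  compl : ∀ a ∈ D, aᶜ ∈ D
  bot : (⊥ : B) ∈ D
  fam : ∀ d ∈ D, fa d ∈ D

/-- The type of atoms of `D`. -/
def Atm (D : Finset B) : Type := {x : B // AtomOf D x}

instance (D : Finset B) : Finite (Atm D) := by
  have h : {x : B | AtomOf D x} ⊆ ↑D := fun x hx => hx.1
  have := (D.finite_toSet.subset h).to_subtype
  exact this

variable {bF bP fa : B → B} {D : Finset B}

/-- One-step filtration relation. -/
def R0 (bF : B → B) (D : Finset B) (x y : Atm D) : Prop := x.1 ⊓ dia bF y.1 ≠ ⊥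
/-- Reflexive-transitive filtration relation. -/
def Rr (bF : B → B) (D : Finset B) : Atm D → Atm D → Prop :=
  Relation.ReflTransGen (R0 bF D)
/-- The S5 filtration relation. -/
def Er (fa : B → B) (D : Finset B) (x y : Atm D) : Prop := x.1 ≤ dia fa y.1

section Erel

theorem ex_mem (hG : GoodD bF bP fa D) {d : B} (hd : d ∈ D) : dia fa d ∈ D :=
  hG.compl _ (hG.fam _ (hG.compl _ hd))

theorem Er_refl (hG : GoodD bF bP fa D) (x : Atm D) : Er fa D x x :=
  hG.alg.ms4.s5.s4.le_dia _

theorem Er_symm (hG : GoodD bF bP fa D) {x y : Atm D} (h : Er fa D x y) : Er fa D y x := by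
  have h1 : x.1 ⊓ dia fa y.1 ≠ ⊥ := by
    rw [inf_eq_left.2 h]
    exact x.2.2.1
  have h2 : y.1 ⊓ dia fa x.1 ≠ ⊥ := fun hb => h1 (hG.alg.ms4.s5.conj hb)
  exact atom_le_of_inf_ne hG.inf y.2 (ex_mem hG x.2.1) h2

theorem Er_trans (hG : GoodD bF bP fa D) {x y z : Atm D} (h1 : Er fa D x y)
    (h2 : Er fa D y z) : Er fa D x z := by
  have h3 : dia fa y.1 ≤ dia fa (dia fa z.1) := hG.alg.ms4.s5.s4.dia_mono h2
  exact h1.trans (h3.trans (hG.alg.ms4.s5.ex_ex z.1).le)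

end Erel

section Rrel

theorem R0_step_boxF (hG : GoodD bF bP fa D) {v : B} (hbv : bF v ∈ D) {x y : Atm D}
    (hx : x.1 ≤ bF v) (hr : R0 bF D x y) : y.1 ≤ bF v := by
  have h1 : x.1 ≤ bF (bF v) := hx.trans (hG.alg.s4t.s4F.le_idem v)
  have h2 : bF (bF v) ⊓ dia bF y.1 ≠ ⊥ := by
    intro hb
    exact hr (le_bot_iff.1 (le_trans (inf_le_inf h1 le_rfl) hb.le))
  have h3 : bF (bF v) ⊓ dia bF y.1 ≤ dia bF (bF v ⊓ y.1) :=
    hG.alg.s4t.s4F.box_inf_dia _ _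
  have h4 : bF v ⊓ y.1 ≠ ⊥ := by
    intro hb
    rw [hb, hG.alg.s4t.s4F.dia_bot] at h3
    exact h2 (le_bot_iff.1 h3)
  rw [inf_comm] at h4
  exact atom_le_of_inf_ne hG.inf y.2 hbv h4

theorem Rr_chain_boxF (hG : GoodD bF bP fa D) {v : B} (hbv : bF v ∈ D) {x y : Atm D}
    (hx : x.1 ≤ bF v) (hr : Rr bF D x y) : y.1 ≤ bF v := by
  induction hr with
  | refl => exact hx
  | tail _ h ih => exact R0_step_boxF hG hbv ih h

theorem R0_step_boxP (hG : GoodD bF bP fa D) {v : B} (hbv : bP v ∈ D) {x y : Atm D}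
    (hy : y.1 ≤ bP v) (hr : R0 bF D x y) : x.1 ≤ bP v := by
  have hconv : y.1 ⊓ dia bP x.1 ≠ ⊥ := fun hb => hr (hG.alg.s4t.conj hb)
  have h1 : y.1 ≤ bP (bP v) := hy.trans (hG.alg.s4t.s4P.le_idem v)
  have h2 : bP (bP v) ⊓ dia bP x.1 ≠ ⊥ := by
    intro hb
    exact hconv (le_bot_iff.1 (le_trans (inf_le_inf h1 le_rfl) hb.le))
  have h3 : bP (bP v) ⊓ dia bP x.1 ≤ dia bP (bP v ⊓ x.1) :=
    hG.alg.s4t.s4P.box_inf_dia _ _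
  have h4 : bP v ⊓ x.1 ≠ ⊥ := by
    intro hb
    rw [hb, hG.alg.s4t.s4P.dia_bot] at h3
    exact h2 (le_bot_iff.1 h3)
  rw [inf_comm] at h4
  exact atom_le_of_inf_ne hG.inf x.2 hbv h4

theorem Rr_chain_boxP (hG : GoodD bF bP fa D) {v : B} (hbv : bP v ∈ D) {x y : Atm D}
    (hy : y.1 ≤ bP v) (hr : Rr bF D x y) : x.1 ≤ bP v := by
  induction hr using Relation.ReflTransGen.head_induction_on with
  | refl => exact hy
  | head h _ ih => exact R0_step_boxP hG hbv ih h

/-- One-step quasi-commutativity. -/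
theorem qc0 (hG : GoodD bF bP fa D) {x x' y' : Atm D} (hE : Er fa D x x')
    (hr : R0 bF D x' y') : ∃ y, R0 bF D x y ∧ Er fa D y y' := by
  have hE' : x'.1 ≤ dia fa x.1 := Er_symm hG hE
  have step1 : x.1 ⊓ dia bF (dia fa y'.1) ≠ ⊥ := by
    intro hb
    have h1 : x.1 ≤ (dia bF (dia fa y'.1))ᶜ := (disjoint_iff.2 hb).le_compl_right
    have h2 : (dia bF (dia fa y'.1))ᶜ = bF (fa y'.1ᶜ) := by
      simp only [dia, compl_compl]
    have h3 : x.1 ≤ fa (bF y'.1ᶜ) := (h1.trans_eq h2).trans (hG.alg.ms4.comm y'.1ᶜ)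
    have h4 : dia fa x.1 ≤ dia fa (fa (bF y'.1ᶜ)) := hG.alg.ms4.s5.s4.dia_mono h3
    have h5 : dia fa x.1 ≤ bF y'.1ᶜ := h4.trans (hG.alg.ms4.s5.ex_fa_le _)
    have h6 : x'.1 ≤ (dia bF y'.1)ᶜ := by
      rw [dia, compl_compl]
      exact hE'.trans h5
    exact hr (le_bot_iff.1 (by
      calc x'.1 ⊓ dia bF y'.1 ≤ (dia bF y'.1)ᶜ ⊓ dia bF y'.1 := inf_le_inf h6 le_rfl
      _ = ⊥ := by simp))
  obtain ⟨y, hy, hyle, hne⟩ := dia_decompose hG.inf hG.compl hG.bot hG.alg.s4t.s4F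
    (ex_mem hG y'.2.1) step1
  exact ⟨⟨y, hy⟩, hne, hyle⟩

/-- Quasi-commutativity along `Rr`. -/
theorem qc (hG : GoodD bF bP fa D) {x x' y' : Atm D} (hE : Er fa D x x')
    (hr : Rr bF D x' y') : ∃ y, Rr bF D x y ∧ Er fa D y y' := by
  induction hr with
  | refl => exact ⟨x, Relation.ReflTransGen.refl, hE⟩
  | tail _ h ih =>
    obtain ⟨w, hw1, hw2⟩ := ih
    obtain ⟨y, hy1, hy2⟩ := qc0 hG hw2 h
    exact ⟨y, hw1.tail hy1, hy2⟩

end Rrel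

/-- Relational operators on `Set (Atm D)`. -/
def fbF (bF : B → B) (D : Finset B) (s : Set (Atm D)) : Set (Atm D) :=
  {x | ∀ y, Rr bF D x y → y ∈ s}
def fbP (bF : B → B) (D : Finset B) (s : Set (Atm D)) : Set (Atm D) :=
  {x | ∀ y, Rr bF D y x → y ∈ s}
def ffa (fa : B → B) (D : Finset B) (s : Set (Atm D)) : Set (Atm D) :=
  {x | ∀ y, Er fa D x y → y ∈ s}

theorem isMS4t_filt (hG : GoodD bF bP fa D) :
    IsMS4t (fbF bF D) (fbP bF D) (ffa fa D) := by
  have hs4F : IsS4 (fbF bF D) := by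
    refine ⟨fun a b => ?_, ?_, fun a => ?_, fun a => ?_⟩
    · ext x; simp only [fbF, Set.mem_setOf_eq, Set.mem_inter_iff]
      constructor
      · intro h; exact ⟨fun y hy => (h y hy).1, fun y hy => (h y hy).2⟩
      · intro h y hy; exact ⟨h.1 y hy, h.2 y hy⟩
    · ext x; simp [fbF]
    · intro x hx; exact hx x Relation.ReflTransGen.refl
    · intro x hx y hxy z hyz; exact hx z (hxy.trans hyz)
  have hs4P : IsS4 (fbP bF D) := by
    refine ⟨fun a b => ?_, ?_, fun a => ?_, fun a => ?_⟩
    · ext x; simp only [fbP, Set.mem_setOf_eq, Set.mem_inter_iff]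
      constructor
      · intro h; exact ⟨fun y hy => (h y hy).1, fun y hy => (h y hy).2⟩
      · intro h y hy; exact ⟨h.1 y hy, h.2 y hy⟩
    · ext x; simp [fbP]
    · intro x hx; exact hx x Relation.ReflTransGen.refl
    · intro x hx y hxy z hyz; exact hx z (hyz.trans hxy)
  have hs5 : IsS5 (ffa fa D) := by
    refine ⟨⟨fun a b => ?_, ?_, fun a => ?_, fun a => ?_⟩, fun a => ?_⟩
    · ext x; simp only [ffa, Set.mem_setOf_eq, Set.mem_inter_iff]
      constructor
      · intro h; exact ⟨fun y hy => (h y hy).1, fun y hy => (h y hy).2⟩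
      · intro h y hy; exact ⟨h.1 y hy, h.2 y hy⟩
    · ext x; simp [ffa]
    · intro x hx; exact hx x (Er_refl hG x)
    · intro x hx y hxy z hyz; exact hx z (Er_trans hG hxy hyz)
    · intro x hx y hxy
      simp only [ffa, Set.mem_compl_iff, Set.mem_setOf_eq, not_forall] at *
      exact ⟨x, Er_symm hG hxy, fun hc => hc hx⟩
  refine ⟨⟨hs4F, hs4P, fun s x hx y hyx => ?_, fun s x hx y hxy => ?_⟩,
    ⟨hs4F, hs5, fun s x hx => ?_⟩⟩
  · -- pf : s ≤ fbP ((fbF sᶜ)ᶜ)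
    simp only [fbF, Set.mem_compl_iff, Set.mem_setOf_eq, not_forall]
    exact ⟨x, hyx, fun hc => hc hx⟩
  · -- fp : s ≤ fbF ((fbP sᶜ)ᶜ)
    simp only [fbP, Set.mem_compl_iff, Set.mem_setOf_eq, not_forall]
    exact ⟨x, hxy, fun hc => hc hx⟩
  · -- comm
    intro x' hxx' y' hr
    obtain ⟨y, hy1, hy2⟩ := qc hG hxx' hr
    exact hx y hy1 y' hy2

/-- The canonical map from `B` to the powerset algebra of atoms. -/
def emb (D : Finset B) (v : B) : Set (Atm D) := {x | x.1 ≤ v}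

theorem emb_inf (v w : B) : emb D (v ⊓ w) = emb D v ⊓ emb D w := by
  ext x; simp [emb, le_inf_iff]

theorem emb_bot : emb D (⊥ : B) = ⊥ := by
  ext x
  simp only [emb, Set.mem_setOf_eq, le_bot_iff]
  exact ⟨fun h => x.2.2.1 h, fun h => h.elim⟩

theorem emb_sup (hG : GoodD bF bP fa D) {v w : B} (hv : v ∈ D) (hw : w ∈ D) :
    emb D (v ⊔ w) = emb D v ⊔ emb D w := by
  ext x
  simp only [emb, Set.mem_setOf_eq, Set.sup_eq_union, Set.mem_union]
  constructor
  · intro h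
    rcases atom_le_or_compl hG.inf x.2 hv with h1 | h1
    · exact Or.inl h1
    · right
      have h2 : x.1 = x.1 ⊓ (v ⊔ w) := (inf_eq_left.2 h).symm
      have h3 : x.1 ⊓ v = ⊥ := le_bot_iff.1 (by
        calc x.1 ⊓ v ≤ vᶜ ⊓ v := inf_le_inf h1 le_rfl
        _ = ⊥ := by simp)
      calc x.1 = x.1 ⊓ (v ⊔ w) := h2
        _ = (x.1 ⊓ v) ⊔ (x.1 ⊓ w) := inf_sup_left _ _ _
        _ = x.1 ⊓ w := by rw [h3]; simp
        _ ≤ w := inf_le_right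
  · intro h
    rcases h with h | h
    · exact h.trans le_sup_left
    · exact h.trans le_sup_right

theorem emb_compl (hG : GoodD bF bP fa D) {v : B} (hv : v ∈ D) :
    emb D vᶜ = (emb D v)ᶜ := by
  ext x
  simp only [emb, Set.mem_setOf_eq, Set.mem_compl_iff]
  constructor
  · intro h hc
    exact x.2.2.1 (le_bot_iff.1 (by
      calc x.1 ≤ vᶜ ⊓ v := le_inf h hc
      _ = ⊥ := by simp))
  · intro h
    rcases atom_le_or_compl hG.inf x.2 hv with h1 | h1
    · exact absurd h1 h
    · exact h1

theorem emb_boxF (hG : GoodD bF bP fa D) {v : B} (hv : v ∈ D) (hbv : bF v ∈ D) :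
    fbF bF D (emb D v) = emb D (bF v) := by
  ext x
  simp only [fbF, emb, Set.mem_setOf_eq]
  constructor
  · intro h
    rcases atom_le_or_compl hG.inf x.2 hbv with h1 | h1
    · exact h1
    · exfalso
      have h2 : (bF v)ᶜ = dia bF vᶜ := by rw [dia, compl_compl]
      have h3 : x.1 ⊓ dia bF vᶜ ≠ ⊥ := by
        rw [inf_eq_left.2 (h1.trans_eq h2)]
        exact x.2.2.1
      obtain ⟨y, hy, hyle, hne⟩ := dia_decompose hG.inf hG.compl hG.bot hG.alg.s4t.s4F
        (hG.compl _ hv) h3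
      have h4 : (⟨y, hy⟩ : Atm D).1 ≤ v := h ⟨y, hy⟩ (Relation.ReflTransGen.single hne)
      exact hy.2.1 (le_bot_iff.1 (by
        calc y ≤ v ⊓ vᶜ := le_inf h4 hyle
        _ = ⊥ := by simp))
  · intro h y hy
    exact (Rr_chain_boxF hG hbv h hy).trans (hG.alg.s4t.s4F.le_self v)

theorem emb_boxP (hG : GoodD bF bP fa D) {v : B} (hv : v ∈ D) (hbv : bP v ∈ D) :
    fbP bF D (emb D v) = emb D (bP v) := by
  ext x
  simp only [fbP, emb, Set.mem_setOf_eq]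
  constructor
  · intro h
    rcases atom_le_or_compl hG.inf x.2 hbv with h1 | h1
    · exact h1
    · exfalso
      have h2 : (bP v)ᶜ = dia bP vᶜ := by rw [dia, compl_compl]
      have h3 : x.1 ⊓ dia bP vᶜ ≠ ⊥ := by
        rw [inf_eq_left.2 (h1.trans_eq h2)]
        exact x.2.2.1
      obtain ⟨y, hy, hyle, hne⟩ := dia_decompose hG.inf hG.compl hG.bot hG.alg.s4t.s4P
        (hG.compl _ hv) h3
      have hr : R0 bF D ⟨y, hy⟩ x := fun hb => hne (hG.alg.s4t.conj' hb)
      have h4 : y ≤ v := h ⟨y, hy⟩ (Relation.ReflTransGen.single hr)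
      exact hy.2.1 (le_bot_iff.1 (by
        calc y ≤ v ⊓ vᶜ := le_inf h4 hyle
        _ = ⊥ := by simp))
  · intro h y hy
    exact (Rr_chain_boxP hG hbv h hy).trans (hG.alg.s4t.s4P.le_self v)

theorem emb_fa (hG : GoodD bF bP fa D) {v : B} (hv : v ∈ D) (hfv : fa v ∈ D) :
    ffa fa D (emb D v) = emb D (fa v) := by
  ext x
  simp only [ffa, emb, Set.mem_setOf_eq]
  constructor
  · intro h
    rcases atom_le_or_compl hG.inf x.2 hfv with h1 | h1
    · exact h1
    · exfalso
      have h2 : (fa v)ᶜ = dia fa vᶜ := by rw [dia, compl_compl]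
      have h3 : x.1 ⊓ dia fa vᶜ ≠ ⊥ := by
        rw [inf_eq_left.2 (h1.trans_eq h2)]
        exact x.2.2.1
      obtain ⟨y, hy, hyle, hne⟩ := dia_decompose hG.inf hG.compl hG.bot hG.alg.ms4.s5.s4
        (hG.compl _ hv) h3
      have hE : Er fa D x ⟨y, hy⟩ :=
        atom_le_of_inf_ne hG.inf x.2 (ex_mem hG hy.1) hne
      have h4 : y ≤ v := h ⟨y, hy⟩ hE
      exact hy.2.1 (le_bot_iff.1 (by
        calc y ≤ v ⊓ vᶜ := le_inf h4 hyle
        _ = ⊥ := by simp))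
  · intro h y hy
    have h1 : y.1 ≤ dia fa x.1 := Er_symm hG hy
    have h2 : dia fa x.1 ≤ dia fa (fa v) := hG.alg.ms4.s5.s4.dia_mono h
    have h3 : dia fa (fa v) = fa v := hG.alg.ms4.s5.ex_fa v
    exact ((h1.trans h2).trans_eq h3).trans (hG.alg.ms4.s5.s4.le_self v)

end Filtration
section Gen

open scoped Classical

variable {B : Type} [BooleanAlgebra B]

theorem split_eq {a x y : B} (h1 : x ⊓ a = y ⊓ a) (h2 : x ⊓ aᶜ = y ⊓ aᶜ) : x = y := by
  have hx : x = (x ⊓ a) ⊔ (x ⊓ aᶜ) := by rw [← inf_sup_left]; simp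
  have hy : y = (y ⊓ a) ⊔ (y ⊓ aᶜ) := by rw [← inf_sup_left]; simp
  rw [hx, hy, h1, h2]

theorem cell_cut {a u v : B} : ((a ⊓ u) ⊔ (aᶜ ⊓ v)) ⊓ a = u ⊓ a := by
  rw [inf_sup_right]
  have h1 : a ⊓ u ⊓ a = u ⊓ a := by
    rw [inf_comm a u, inf_assoc, inf_idem]
  have h2 : aᶜ ⊓ v ⊓ a = ⊥ := by
    rw [inf_comm aᶜ v, inf_assoc]
    simp
  rw [h1, h2, sup_bot_eq]

theorem cell_cut' {a u v : B} : ((a ⊓ u) ⊔ (aᶜ ⊓ v)) ⊓ aᶜ = v ⊓ aᶜ := by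
  rw [inf_sup_right]
  have h1 : aᶜ ⊓ v ⊓ aᶜ = v ⊓ aᶜ := by
    rw [inf_comm aᶜ v, inf_assoc, inf_idem]
  have h2 : a ⊓ u ⊓ aᶜ = ⊥ := by
    rw [inf_comm a u, inf_assoc]
    simp
  rw [h1, h2, bot_sup_eq]

theorem cell_inf (a d1 d2 e1 e2 : B) :
    ((a ⊓ d1) ⊔ (aᶜ ⊓ d2)) ⊓ ((a ⊓ e1) ⊔ (aᶜ ⊓ e2))
      = (a ⊓ (d1 ⊓ e1)) ⊔ (aᶜ ⊓ (d2 ⊓ e2)) := by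
  apply split_eq (a := a)
  · calc ((a ⊓ d1) ⊔ (aᶜ ⊓ d2)) ⊓ ((a ⊓ e1) ⊔ (aᶜ ⊓ e2)) ⊓ a
        = (((a ⊓ d1) ⊔ (aᶜ ⊓ d2)) ⊓ a) ⊓ (((a ⊓ e1) ⊔ (aᶜ ⊓ e2)) ⊓ a) :=
          inf_inf_distrib_right _ _ _
      _ = (d1 ⊓ a) ⊓ (e1 ⊓ a) := by rw [cell_cut, cell_cut]
      _ = (d1 ⊓ e1) ⊓ a := (inf_inf_distrib_right _ _ _).symm
      _ = ((a ⊓ (d1 ⊓ e1)) ⊔ (aᶜ ⊓ (d2 ⊓ e2))) ⊓ a := cell_cut.symm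
  · calc ((a ⊓ d1) ⊔ (aᶜ ⊓ d2)) ⊓ ((a ⊓ e1) ⊔ (aᶜ ⊓ e2)) ⊓ aᶜ
        = (((a ⊓ d1) ⊔ (aᶜ ⊓ d2)) ⊓ aᶜ) ⊓ (((a ⊓ e1) ⊔ (aᶜ ⊓ e2)) ⊓ aᶜ) :=
          inf_inf_distrib_right _ _ _
      _ = (d2 ⊓ aᶜ) ⊓ (e2 ⊓ aᶜ) := by rw [cell_cut', cell_cut']
      _ = (d2 ⊓ e2) ⊓ aᶜ := (inf_inf_distrib_right _ _ _).symm
      _ = ((a ⊓ (d1 ⊓ e1)) ⊔ (aᶜ ⊓ (d2 ⊓ e2))) ⊓ aᶜ := cell_cut'.symm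

theorem cell_compl (a d1 d2 : B) :
    ((a ⊓ d1) ⊔ (aᶜ ⊓ d2))ᶜ = (a ⊓ d1ᶜ) ⊔ (aᶜ ⊓ d2ᶜ) := by
  apply compl_unique
  · rw [cell_inf]; simp
  · calc ((a ⊓ d1) ⊔ (aᶜ ⊓ d2)) ⊔ ((a ⊓ d1ᶜ) ⊔ (aᶜ ⊓ d2ᶜ))
        = ((a ⊓ d1) ⊔ (a ⊓ d1ᶜ)) ⊔ ((aᶜ ⊓ d2) ⊔ (aᶜ ⊓ d2ᶜ)) := by ac_rfl
      _ = (a ⊓ (d1 ⊔ d1ᶜ)) ⊔ (aᶜ ⊓ (d2 ⊔ d2ᶜ)) := by rw [inf_sup_left, inf_sup_left]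
      _ = ⊤ := by simp

/-- The boolean subalgebra generated by a list, as a finset. -/
noncomputable def genC : List B → Finset B
  | [] => {⊥, ⊤}
  | a :: l => ((genC l) ×ˢ (genC l)).image fun p => (a ⊓ p.1) ⊔ (aᶜ ⊓ p.2)

theorem mem_genC_cons {a : B} {l : List B} {x : B} :
    x ∈ genC (a :: l) ↔ ∃ d1 ∈ genC l, ∃ d2 ∈ genC l, (a ⊓ d1) ⊔ (aᶜ ⊓ d2) = x := by
  simp only [genC, Finset.mem_image, Finset.mem_product]
  constructor
  · rintro ⟨⟨d1, d2⟩, ⟨h1, h2⟩, he⟩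
    exact ⟨d1, h1, d2, h2, he⟩
  · rintro ⟨d1, h1, d2, h2, he⟩
    exact ⟨(d1, d2), ⟨h1, h2⟩, he⟩

theorem genC_bot (l : List B) : (⊥ : B) ∈ genC l := by
  induction l with
  | nil => simp [genC]
  | cons a l ih =>
    exact mem_genC_cons.2 ⟨⊥, ih, ⊥, ih, by simp⟩

theorem genC_top (l : List B) : (⊤ : B) ∈ genC l := by
  induction l with
  | nil => simp [genC]
  | cons a l ih =>
    exact mem_genC_cons.2 ⟨⊤, ih, ⊤, ih, by simp⟩

theorem genC_inf (l : List B) : ∀ x ∈ genC l, ∀ y ∈ genC l, x ⊓ y ∈ genC l := by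
  induction l with
  | nil =>
    intro x hx y hy
    simp only [genC, Finset.mem_insert, Finset.mem_singleton] at *
    rcases hx with h | h <;> rcases hy with h' | h' <;> subst h <;> subst h' <;> simp
  | cons a l ih =>
    intro x hx y hy
    obtain ⟨d1, h1, d2, h2, he⟩ := mem_genC_cons.1 hx
    obtain ⟨e1, g1, e2, g2, ge⟩ := mem_genC_cons.1 hy
    subst he; subst ge
    rw [cell_inf]
    exact mem_genC_cons.2 ⟨d1 ⊓ e1, ih _ h1 _ g1, d2 ⊓ e2, ih _ h2 _ g2, rfl⟩

theorem genC_compl (l : List B) : ∀ x ∈ genC l, xᶜ ∈ genC l := by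
  induction l with
  | nil =>
    intro x hx
    simp only [genC, Finset.mem_insert, Finset.mem_singleton] at *
    rcases hx with h | h <;> subst h <;> simp
  | cons a l ih =>
    intro x hx
    obtain ⟨d1, h1, d2, h2, he⟩ := mem_genC_cons.1 hx
    subst he
    rw [cell_compl]
    exact mem_genC_cons.2 ⟨d1ᶜ, ih _ h1, d2ᶜ, ih _ h2, rfl⟩

theorem genC_mem_gen (l : List B) : ∀ a ∈ l, a ∈ genC l := by
  induction l with
  | nil => simp
  | cons b l ih =>
    intro a ha
    rcases List.mem_cons.1 ha with h | h
    · subst h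
      exact mem_genC_cons.2 ⟨⊤, genC_top l, ⊥, genC_bot l, by simp⟩
    · refine mem_genC_cons.2 ⟨a, ih a h, a, ih a h, ?_⟩
      rw [← inf_sup_right]
      simp

theorem genC_min {l : List B} (S : Set B) (hg : ∀ a ∈ l, a ∈ S)
    (hinfS : ∀ x ∈ S, ∀ y ∈ S, x ⊓ y ∈ S) (hcomplS : ∀ x ∈ S, xᶜ ∈ S)
    (hbotS : (⊥ : B) ∈ S) (htopS : (⊤ : B) ∈ S) : ∀ x ∈ genC l, x ∈ S := by
  have hsupS : ∀ x ∈ S, ∀ y ∈ S, x ⊔ y ∈ S := by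
    intro x hx y hy
    have h := hcomplS _ (hinfS _ (hcomplS _ hx) _ (hcomplS _ hy))
    simpa using h
  induction l with
  | nil =>
    intro x hx
    simp only [genC, Finset.mem_insert, Finset.mem_singleton] at hx
    rcases hx with h | h <;> subst h
    · exact hbotS
    · exact htopS
  | cons a l ih =>
    intro x hx
    obtain ⟨d1, h1, d2, h2, he⟩ := mem_genC_cons.1 hx
    subst he
    have ha : a ∈ S := hg a List.mem_cons_self
    have hd1 : d1 ∈ S := ih (fun b hb => hg b (List.mem_cons_of_mem a hb)) _ h1
    have hd2 : d2 ∈ S := ih (fun b hb => hg b (List.mem_cons_of_mem a hb)) _ h2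
    exact hsupS _ (hinfS _ ha _ hd1) _ (hinfS _ (hcomplS _ ha) _ hd2)

theorem finset_inf_mem {D : Finset B} (hinf : ∀ a ∈ D, ∀ b ∈ D, a ⊓ b ∈ D)
    (htop : (⊤ : B) ∈ D) {β : Type*} (s : Finset β) (g : β → B)
    (hg : ∀ b ∈ s, g b ∈ D) : s.inf g ∈ D := by
  induction s using Finset.cons_induction with
  | empty => simpa using htop
  | cons b s hb ih =>
    rw [Finset.inf_cons]
    exact hinf _ (hg b (Finset.mem_cons_self b s)) _
      (ih fun c hc => hg c (Finset.mem_cons_of_mem hc))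

theorem finset_inf_fixed {fa : B → B} (h : IsS5 fa) {β : Type*} (s : Finset β)
    (g : β → B) (hfix : ∀ b ∈ s, dia fa (g b) = g b) :
    dia fa (s.inf g) = s.inf g := by
  induction s using Finset.cons_induction with
  | empty =>
    simp only [Finset.inf_empty]
    exact le_antisymm le_top (h.s4.le_dia ⊤)
  | cons b s hb ih =>
    rw [Finset.inf_cons]
    exact h.fixed_inf (hfix b (Finset.mem_cons_self b s))
      (ih fun c hc => hfix c (Finset.mem_cons_of_mem hc))

theorem finset_sup_dia {box : B → B} (h : IsS4 box) (s : Finset B) :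
    dia box (s.sup id) = s.sup fun b => dia box b := by
  induction s using Finset.cons_induction with
  | empty => simpa using h.dia_bot
  | cons b s hb ih => rw [Finset.sup_cons, Finset.sup_cons, h.dia_sup, ih]; rfl

/-- The monadic (S5-closed) finite subalgebra generated by `G`. -/
noncomputable def mclose (fa : B → B) (G : List B) : Finset B :=
  genC (G ++ (genC G).toList.map (dia fa))

variable {fa : B → B} {G : List B}

theorem mclose_gen : ∀ a ∈ G, a ∈ mclose fa G := fun a ha =>
  genC_mem_gen _ a (List.mem_append_left _ ha)

theorem mclose_D1 : ∀ d ∈ genC G, d ∈ mclose fa G := by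
  intro d hd
  refine genC_min (↑(mclose fa G)) ?_ ?_ ?_ ?_ ?_ d hd
  · intro a ha; exact mclose_gen a ha
  · intro x hx y hy; exact genC_inf _ _ hx _ hy
  · intro x hx; exact genC_compl _ _ hx
  · exact genC_bot _
  · exact genC_top _

theorem mclose_exD1 : ∀ d ∈ genC G, dia fa d ∈ mclose fa G := by
  intro d hd
  refine genC_mem_gen _ _ (List.mem_append_right _ ?_)
  exact List.mem_map.2 ⟨d, Finset.mem_toList.2 hd, rfl⟩

theorem mclose_atom_ex (h : IsS5 fa) {t : B} (ht : AtomOf (mclose fa G) t) :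
    dia fa t ∈ mclose fa G := by
  set D := mclose fa G with hD
  set D1 := genC G with hD1
  set α := D1.inf (fun d => if t ≤ d then d else dᶜ) with hα
  set β := (D1.image (dia fa)).inf (fun f => if t ≤ f then f else fᶜ) with hβ
  have htα : t ≤ α := by
    refine Finset.le_inf ?_
    intro d hd
    by_cases hle : t ≤ d
    · simpa [hle]
    · simp only [hle, if_false]
      rcases atom_le_or_compl (genC_inf _) ht (mclose_D1 d hd) with h' | h'
      · exact absurd h' hle
      · exact h'
  have htβ : t ≤ β := by
    refine Finset.le_inf ?_
    intro f hf
    obtain ⟨d, hd, rfl⟩ := Finset.mem_image.1 hf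
    by_cases hle : t ≤ dia fa d
    · simpa [hle]
    · simp only [hle, if_false]
      rcases atom_le_or_compl (genC_inf _) ht (mclose_exD1 d hd) with h' | h'
      · exact absurd h' hle
      · exact h'
  have hαD1 : α ∈ D1 := by
    refine finset_inf_mem (genC_inf G) (genC_top G) _ _ ?_
    intro d hd
    by_cases hle : t ≤ d
    · simpa [hle]
    · simp only [hle, if_false]
      exact genC_compl _ _ hd
  have hβD : β ∈ D := by
    refine finset_inf_mem (genC_inf _) (genC_top _) _ _ ?_
    intro f hf
    obtain ⟨d, hd, rfl⟩ := Finset.mem_image.1 hf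
    by_cases hle : t ≤ dia fa d
    · simp only [hle, if_true]; exact mclose_exD1 d hd
    · simp only [hle, if_false]
      exact genC_compl _ _ (mclose_exD1 d hd)
  have hβfix : dia fa β = β := by
    refine finset_inf_fixed h _ _ ?_
    intro f hf
    obtain ⟨d, hd, rfl⟩ := Finset.mem_image.1 hf
    by_cases hle : t ≤ dia fa d
    · simpa [hle] using h.ex_ex d
    · simp only [hle, if_false]
      exact h.fixed_compl (h.ex_ex d)
  -- minimality argument : α ⊓ β ≤ t
  have hle : α ⊓ β ≤ t := by
    have hS : ∀ x ∈ genC (G ++ (genC G).toList.map (dia fa)),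
        x ∈ {e : B | α ⊓ β ≤ e ∨ α ⊓ β ≤ eᶜ} := by
      refine genC_min _ ?_ ?_ ?_ ?_ ?_
      · intro a ha
        rcases List.mem_append.1 ha with hg | hm
        · have haD1 : a ∈ D1 := genC_mem_gen _ _ hg
          have h1 : α ≤ (if t ≤ a then a else aᶜ) := Finset.inf_le haD1
          by_cases hle : t ≤ a
          · left; simp only [hle, if_true] at h1; exact inf_le_left.trans h1
          · right; simp only [hle, if_false] at h1; exact inf_le_left.trans h1
        · obtain ⟨d, hd, rfl⟩ := List.mem_map.1 hm
          have hdD1 : d ∈ D1 := Finset.mem_toList.1 hd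
          have hfmem : dia fa d ∈ D1.image (dia fa) := Finset.mem_image_of_mem _ hdD1
          have h1 : β ≤ (if t ≤ dia fa d then dia fa d else (dia fa d)ᶜ) :=
            Finset.inf_le hfmem
          by_cases hle : t ≤ dia fa d
          · left; simp only [hle, if_true] at h1; exact inf_le_right.trans h1
          · right; simp only [hle, if_false] at h1; exact inf_le_right.trans h1
      · rintro x (hx | hx) y (hy | hy)
        · exact Or.inl (le_inf hx hy)
        · exact Or.inr (hy.trans (compl_le_compl inf_le_right))
        · exact Or.inr (hx.trans (compl_le_compl inf_le_left))
        · exact Or.inr (hx.trans (compl_le_compl inf_le_left))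
      · rintro x (hx | hx)
        · exact Or.inr (by rwa [compl_compl])
        · exact Or.inl hx
      · exact Or.inr (by simp)
      · exact Or.inl le_top
    rcases hS t ht.1 with h' | h'
    · exact h'
    · exfalso
      refine ht.2.1 (le_bot_iff.1 ?_)
      calc t ≤ t ⊓ tᶜ := le_inf le_rfl ((le_inf htα htβ).trans h')
        _ = ⊥ := by simp
  have heq : t = α ⊓ β := le_antisymm (le_inf htα htβ) hle
  rw [heq, h.ex_inf_fixed hβfix]
  exact genC_inf _ _ (mclose_exD1 α hαD1) _ hβD

theorem mclose_ex (h : IsS5 fa) {d : B} (hd : d ∈ mclose fa G) :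
    dia fa d ∈ mclose fa G := by
  have hdec : (atomsBelow (mclose fa G) d).sup id = d :=
    atomsBelow_sup (genC_inf _) (genC_compl _) (genC_bot _) hd
  have h1 : dia fa d = (atomsBelow (mclose fa G) d).sup fun b => dia fa b := by
    rw [← hdec, finset_sup_dia h.s4, hdec]
  have h2 : ((atomsBelow (mclose fa G) d).image (dia fa)).sup id
      = (atomsBelow (mclose fa G) d).sup fun b => dia fa b := Finset.sup_image _ _ _
  rw [h1, ← h2]
  refine sup_mem_D (genC_inf _) (genC_compl _) (genC_bot _) _ ?_
  intro a ha
  obtain ⟨b, hb, rfl⟩ := Finset.mem_image.1 ha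
  exact mclose_atom_ex h (Finset.mem_filter.1 hb).2.1

theorem mclose_fam (h : IsS5 fa) {d : B} (hd : d ∈ mclose fa G) :
    fa d ∈ mclose fa G := by
  have h1 : fa d = (dia fa dᶜ)ᶜ := by
    rw [dia, compl_compl, compl_compl]
  rw [h1]
  exact genC_compl _ _ (mclose_ex h (genC_compl _ _ hd))

end Gen
/-- The list of subformulas of a formula. -/
def AForm.subf : AForm → List AForm
  | .var n => [.var n]
  | .bot => [.bot]
  | .and φ ψ => .and φ ψ :: (φ.subf ++ ψ.subf)
  | .or φ ψ => .or φ ψ :: (φ.subf ++ ψ.subf)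
  | .imp φ ψ => .imp φ ψ :: (φ.subf ++ ψ.subf)
  | .boxF φ => .boxF φ :: φ.subf
  | .boxP φ => .boxP φ :: φ.subf
  | .fa φ => .fa φ :: φ.subf

theorem AForm.self_mem_subf (φ : AForm) : φ ∈ φ.subf := by
  cases φ <;> simp [AForm.subf]

/-- The filtration lemma: values of subformulas are preserved. -/
theorem aeval_filt {B : Type} [BooleanAlgebra B] {bF bP fa : B → B} {D : Finset B}
    (hG : GoodD bF bP fa D) (v : Nat → B) :
    ∀ ψ : AForm, (∀ χ ∈ ψ.subf, aeval bF bP fa v χ ∈ D) →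
      aeval (fbF bF D) (fbP bF D) (ffa fa D) (fun n => emb D (v n)) ψ
        = emb D (aeval bF bP fa v ψ) := by
  intro ψ
  induction ψ with
  | var n => intro _; rfl
  | bot => intro _; exact emb_bot.symm
  | and φ ψ ih1 ih2 =>
    intro hsub
    simp only [aeval]
    have h1 := ih1 fun χ hχ => hsub χ (List.mem_cons_of_mem _ (List.mem_append_left _ hχ))
    have h2 := ih2 fun χ hχ => hsub χ (List.mem_cons_of_mem _ (List.mem_append_right _ hχ))
    show _ ⊓ _ = _
    rw [h1, h2, emb_inf]
  | or φ ψ ih1 ih2 =>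
    intro hsub
    simp only [aeval]
    have h1 := ih1 fun χ hχ => hsub χ (List.mem_cons_of_mem _ (List.mem_append_left _ hχ))
    have h2 := ih2 fun χ hχ => hsub χ (List.mem_cons_of_mem _ (List.mem_append_right _ hχ))
    have hv1 : aeval bF bP fa v φ ∈ D := hsub φ
      (List.mem_cons_of_mem _ (List.mem_append_left _ φ.self_mem_subf))
    have hv2 : aeval bF bP fa v ψ ∈ D := hsub ψ
      (List.mem_cons_of_mem _ (List.mem_append_right _ ψ.self_mem_subf))
    show _ ⊔ _ = _
    rw [h1, h2, emb_sup hG hv1 hv2]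
  | imp φ ψ ih1 ih2 =>
    intro hsub
    simp only [aeval]
    have h1 := ih1 fun χ hχ => hsub χ (List.mem_cons_of_mem _ (List.mem_append_left _ hχ))
    have h2 := ih2 fun χ hχ => hsub χ (List.mem_cons_of_mem _ (List.mem_append_right _ hχ))
    have hv1 : aeval bF bP fa v φ ∈ D := hsub φ
      (List.mem_cons_of_mem _ (List.mem_append_left _ φ.self_mem_subf))
    have hv2 : aeval bF bP fa v ψ ∈ D := hsub ψ
      (List.mem_cons_of_mem _ (List.mem_append_right _ ψ.self_mem_subf))
    show _ᶜ ⊔ _ = _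
    rw [h1, h2, ← emb_compl hG hv1, emb_sup hG (hG.compl _ hv1) hv2]
  | boxF φ ih =>
    intro hsub
    simp only [aeval]
    have h1 := ih fun χ hχ => hsub χ (List.mem_cons_of_mem _ hχ)
    have hv : aeval bF bP fa v φ ∈ D := hsub φ (List.mem_cons_of_mem _ φ.self_mem_subf)
    have hbv : bF (aeval bF bP fa v φ) ∈ D := hsub (.boxF φ) (AForm.self_mem_subf _)
    show fbF bF D _ = _
    rw [h1, emb_boxF hG hv hbv]
  | boxP φ ih =>
    intro hsub
    simp only [aeval]
    have h1 := ih fun χ hχ => hsub χ (List.mem_cons_of_mem _ hχ)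
    have hv : aeval bF bP fa v φ ∈ D := hsub φ (List.mem_cons_of_mem _ φ.self_mem_subf)
    have hbv : bP (aeval bF bP fa v φ) ∈ D := hsub (.boxP φ) (AForm.self_mem_subf _)
    show fbP bF D _ = _
    rw [h1, emb_boxP hG hv hbv]
  | fa φ ih =>
    intro hsub
    simp only [aeval]
    have h1 := ih fun χ hχ => hsub χ (List.mem_cons_of_mem _ hχ)
    have hv : aeval bF bP fa v φ ∈ D := hsub φ (List.mem_cons_of_mem _ φ.self_mem_subf)
    have hbv : fa (aeval bF bP fa v φ) ∈ D := hsub (.fa φ) (AForm.self_mem_subf _)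
    show ffa fa D _ = _
    rw [h1, emb_fa hG hv hbv]

open FMP FMP.Lin

/-- `MS4.t` has the finite model property: every formula not
provable in `MS4.t` is refuted in a finite MS4.t-algebra under some assignment. -/
theorem MS4t_fmp (φ : AForm) (h : ¬ MS4t φ) :
    ∃ (B : Type) (_ : BooleanAlgebra B) (bF bP fa : B → B),
      Finite B ∧ IsMS4t bF bP fa ∧ ∃ v : Nat → B, aeval bF bP fa v φ ≠ ⊤ := by
  classical
  set v0 : Nat → Lin := fun n => Lin.mk (.var n) with hv0
  set G : List Lin := φ.subf.map (aeval boxF' boxP' fa' v0) with hGdef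
  set D : Finset Lin := mclose fa' G with hD
  have hGood : GoodD boxF' boxP' fa' D :=
    ⟨isMS4t_Lin, genC_inf _, genC_compl _, genC_bot _,
      fun d hd => mclose_fam isS5_fa hd⟩
  refine ⟨Set (Atm D), inferInstance, fbF boxF' D, fbP boxF' D, ffa fa' D,
    ?_, isMS4t_filt hGood, fun n => emb D (v0 n), ?_⟩
  · infer_instance
  · have hsub : ∀ χ ∈ φ.subf, aeval boxF' boxP' fa' v0 χ ∈ D := by
      intro χ hχ
      exact mclose_gen _ (List.mem_map_of_mem hχ)
    have hfval := aeval_filt hGood v0 φ hsub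
    rw [hfval]
    have hvmem : aeval boxF' boxP' fa' v0 φ ∈ D := hsub φ φ.self_mem_subf
    have hval : aeval boxF' boxP' fa' v0 φ = Lin.mk φ := aeval_mk φ
    have hne : (aeval boxF' boxP' fa' v0 φ)ᶜ ≠ ⊥ := by
      rw [hval]
      intro hb
      exact mk_ne_top h (compl_eq_bot.1 hb)
    obtain ⟨x, hx, hxle⟩ := exists_atom_le (genC_compl _ _ hvmem) hne
    intro htop
    have hmem : (⟨x, hx⟩ : Atm D) ∈ emb D (aeval boxF' boxP' fa' v0 φ) := by
      rw [htop]; trivial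
    have hle2 : x ≤ aeval boxF' boxP' fa' v0 φ := hmem
    exact hx.2.1 (le_bot_iff.1 (by
      calc x ≤ _ ⊓ _ᶜ := le_inf hle2 hxle
        _ = ⊥ := by simp))
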